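/- Edmonds–Karp distance monotonicity: let f be a flow and let s = v_0, v_1, …, v_k = t be a shortest augmenting path (a residual path from s to t, with pairwise distinct vertices, such that no residual path from s to t has length less than k). Let δ = min_i r_f v_i v_{i+1} and let f' be obtained from f by adding δ to f v_i v_{i+1} and subtracting δ from f v_{i+1} v_i for each i, leaving all other pairs unchanged. Then residual distances from s do not decrease: for every vertex u and every residual path from s to u of length m with respect to f', there exists a residual path from s to u of length at most m with respect to f. -/

import Mathlib

open Finset

variable {V : Type*} [Fintype V] [DecidableEq V]

/-- A flow on a network with capacities `c`, source `s` and sink `t`. -/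
def IsFlow (c : V → V → ℝ) (s t : V) (f : V → V → ℝ) : Prop :=
  (∀ u v, f u v ≤ c u v) ∧ (∀ u v, f u v = - f v u) ∧
    ∀ v, v ≠ s → v ≠ t → ∑ u, f u v = 0

/-- A residual path from `a` to `b` of length `k` w.r.t. flow `f`:
a list of vertices `a = v 0, v 1, …, v k = b` with positive residual
capacity `c - f` along each consecutive pair. -/
def IsResidualPath (c f : V → V → ℝ) (a b : V) (k : ℕ) (p : Fin (k + 1) → V) : Prop :=
  p 0 = a ∧ p (Fin.last k) = b ∧
    ∀ i : Fin k, 0 < c (p i.castSucc) (p i.succ) - f (p i.castSucc) (p i.succ)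

set_option linter.unusedSectionVars false

lemma rp_seg (c f : V → V → ℝ) (m : ℕ) (q : Fin (m + 1) → V)
    (hq : ∀ i : Fin m, 0 < c (q i.castSucc) (q i.succ) - f (q i.castSucc) (q i.succ))
    (a l : ℕ) (h : a + l ≤ m) :
    IsResidualPath c f (q ⟨a, by omega⟩) (q ⟨a + l, by omega⟩) l
      (fun j : Fin (l + 1) => q ⟨a + j, by omega⟩) := by
  refine ⟨by simp, by simp [Fin.last], ?_⟩
  intro j
  have := hq ⟨a + j, by omega⟩
  simpa [Fin.castSucc, Fin.succ, Fin.castAdd, Fin.castLE, Nat.add_assoc] using this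

lemma rp_snoc (c f : V → V → ℝ) {a b d : V} {m : ℕ} {q : Fin (m + 1) → V}
    (hq : IsResidualPath c f a b m q) (hd : 0 < c b d - f b d) :
    IsResidualPath c f a d (m + 1) (Fin.snoc q d) := by
  obtain ⟨h0, hl, he⟩ := hq
  refine ⟨?_, by simp, ?_⟩
  · rw [show (0 : Fin (m + 2)) = Fin.castSucc 0 from rfl, Fin.snoc_castSucc]; exact h0
  · intro i
    refine Fin.lastCases ?_ ?_ i
    · rw [Fin.succ_last, Fin.snoc_last, Fin.snoc_castSucc, hl]; exact hd
    · intro j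
      have := he j
      rw [Fin.succ_castSucc]
      simp only [Fin.snoc_castSucc]; exact this

lemma rp_append (c f : V → V → ℝ) {a b : V} {m : ℕ} {q : Fin (m + 1) → V}
    (hq : IsResidualPath c f a b m q) :
    ∀ (n : ℕ) (d : V) (r : Fin (n + 1) → V), IsResidualPath c f b d n r →
      ∃ w : Fin (m + n + 1) → V, IsResidualPath c f a d (m + n) w := by
  intro n
  induction n with
  | zero =>
    intro d r hr
    have : b = d := by
      have h0 := hr.1; have hl := hr.2.1
      rw [show (Fin.last 0) = 0 from rfl] at hl
      rw [h0] at hl; exact hl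
    exact ⟨q, this ▸ hq⟩
  | succ n ih =>
    intro d r hr
    have hseg := rp_seg c f (n + 1) r hr.2.2 0 n (by omega)
    rw [show r ⟨0, by omega⟩ = b from hr.1] at hseg
    obtain ⟨w, hw⟩ := ih (r ⟨0 + n, by omega⟩) _ hseg
    have hed := hr.2.2 (Fin.last n)
    have hlast : r (Fin.last n).succ = d := by
      rw [Fin.succ_last]; exact hr.2.1
    rw [hlast] at hed
    have : r (Fin.castSucc (Fin.last n)) = r ⟨0 + n, by omega⟩ := by
      congr 1; ext; simp [Fin.last]
    rw [this] at hed
    exact ⟨Fin.snoc w d, rp_snoc c f hw hed⟩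

/-- Edmonds–Karp monotonicity: after augmenting along a shortest augmenting
path, residual distances from the source do not decrease. -/
theorem edmonds_karp_distance_monotone (c : V → V → ℝ) (s t : V) (hst : s ≠ t)
    (hc : ∀ u v, 0 ≤ c u v) (f : V → V → ℝ) (hf : IsFlow c s t f)
    (k : ℕ) (hk : 0 < k) (p : Fin (k + 1) → V)
    (hp : IsResidualPath c f s t k p) (hinj : Function.Injective p)
    (hshortest : ∀ (m : ℕ) (q : Fin (m + 1) → V), IsResidualPath c f s t m q → k ≤ m)
    (δ : ℝ)
    (hδ : δ = (Finset.univ : Finset (Fin k)).inf'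
      (Finset.univ_nonempty_iff.mpr (Fin.pos_iff_nonempty.mp hk))
      (fun i => c (p i.castSucc) (p i.succ) - f (p i.castSucc) (p i.succ)))
    (f' : V → V → ℝ)
    (hf'fwd : ∀ i : Fin k, f' (p i.castSucc) (p i.succ) = f (p i.castSucc) (p i.succ) + δ)
    (hf'bwd : ∀ i : Fin k, f' (p i.succ) (p i.castSucc) = f (p i.succ) (p i.castSucc) - δ)
    (hf'other : ∀ x y, (∀ i : Fin k,
        ¬(p i.castSucc = x ∧ p i.succ = y) ∧ ¬(p i.castSucc = y ∧ p i.succ = x)) →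
      f' x y = f x y) :
    ∀ (u : V) (m : ℕ) (q : Fin (m + 1) → V), IsResidualPath c f' s u m q →
      ∃ m' ≤ m, ∃ q' : Fin (m' + 1) → V, IsResidualPath c f s u m' q' := by
  have hδpos : 0 < δ := by
    rw [hδ]
    exact (Finset.lt_inf'_iff _).mpr (fun j _ => hp.2.2 j)
  intro u m q hq
  induction m generalizing u with
  | zero =>
    have hus : u = s := by
      rw [← hq.2.1, show (Fin.last 0) = 0 from rfl, hq.1]
    refine ⟨0, le_refl 0, fun _ => s, rfl, hus ▸ rfl, fun i => i.elim0⟩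
  | succ m ih =>
    have hseg := rp_seg c f' (m + 1) q hq.2.2 0 m (by omega)
    have hseg' : IsResidualPath c f' s (q ⟨m, by omega⟩) m
        (fun j : Fin (m + 1) => q ⟨0 + j, by omega⟩) := by
      refine ⟨?_, ?_, hseg.2.2⟩
      · rw [hseg.1]; exact hq.1
      · rw [hseg.2.1]; congr 1; ext; simp
    obtain ⟨m₁, hm₁, r, hr⟩ := ih (q ⟨m, by omega⟩) _ hseg'
    have he : 0 < c (q ⟨m, by omega⟩) u - f' (q ⟨m, by omega⟩) u := by
      have h := hq.2.2 (Fin.last m)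
      rw [Fin.succ_last, hq.2.1] at h
      exact h
    set w := q ⟨m, by omega⟩ with hwdef
    by_cases h1 : 0 < c w u - f w u
    · exact ⟨m₁ + 1, by omega, _, rp_snoc c f hr h1⟩
    · have hlt : f' w u < f w u := by
        push_neg at h1; linarith
      have hex : ∃ i : Fin k,
          (p i.castSucc = w ∧ p i.succ = u) ∨ (p i.castSucc = u ∧ p i.succ = w) := by
        by_contra hcon
        have := hf'other w u (fun i =>
          ⟨fun h => hcon ⟨i, Or.inl h⟩, fun h => hcon ⟨i, Or.inr h⟩⟩)
        exact absurd this (ne_of_lt hlt)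
      obtain ⟨i, hi⟩ := hex
      rcases hi with ⟨h2, h3⟩ | ⟨h2, h3⟩
      · have := hf'fwd i
        rw [h2, h3] at this
        linarith
      · -- u = p i.castSucc, w = p i.succ
        have hik : (i : ℕ) < k := i.isLt
        have hsuf := rp_seg c f k p hp.2.2 ((i : ℕ) + 1) (k - ((i : ℕ) + 1)) (by omega)
        have hstart : p ⟨(i : ℕ) + 1, by omega⟩ = w := h3
        have hend : p ⟨(i : ℕ) + 1 + (k - ((i : ℕ) + 1)), by omega⟩ = t := by
          rw [← hp.2.1]; congr 1; ext; simp [Fin.last]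
        rw [hstart, hend] at hsuf
        obtain ⟨w2, hw2⟩ := rp_append c f hr _ _ _ hsuf
        have hks := hshortest _ _ hw2
        have him : (i : ℕ) + 1 ≤ m₁ := by omega
        have hpre := rp_seg c f k p hp.2.2 0 (i : ℕ) (by omega)
        have h0 : p ⟨0, by omega⟩ = s := hp.1
        have hui : p ⟨0 + (i : ℕ), by omega⟩ = u := by
          rw [← h2]; congr 1; ext; simp
        rw [h0, hui] at hpre
        exact ⟨(i : ℕ), by omega, _, hpre⟩
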